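/- If f : ℝ → ℝ is a nonnegative Lebesgue-integrable function (not necessarily continuous), then for almost every x ∈ ℝ, the sequence f(n·x) tends to 0 as n → ∞ through the positive integers. -/

import Mathlib

open MeasureTheory Filter
open Set
open scoped ENNReal

lemma count_bound {δ M : ℝ} (hδ : 0 < δ) (y : ℝ) :
    ∑' n : ℕ, ENNReal.ofReal ((n:ℝ)+1)⁻¹ *
        (Ioc (((n:ℝ)+1)*δ) (((n:ℝ)+1)*M)).indicator (fun _ => (1:ℝ≥0∞)) y
      ≤ ENNReal.ofReal (2*M/δ) := by
  by_cases hy : ∃ n : ℕ, y ∈ Ioc (((n:ℝ)+1)*δ) (((n:ℝ)+1)*M)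
  · obtain ⟨n0, hn0⟩ := hy
    have hc0 : (0:ℝ) ≤ (n0:ℝ) := Nat.cast_nonneg n0
    have hyδ : δ < y := by nlinarith [hn0.1]
    have hy0 : 0 < y := hδ.trans hyδ
    have hM : 0 < M := by nlinarith [hn0.2]
    set N : ℕ := ⌈y/δ⌉₊ with hN
    have hvanish : ∀ n : ℕ, n ∉ Finset.range N →
        ENNReal.ofReal ((n:ℝ)+1)⁻¹ *
          (Ioc (((n:ℝ)+1)*δ) (((n:ℝ)+1)*M)).indicator (fun _ => (1:ℝ≥0∞)) y = 0 := by
      intro n hn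
      have hnot : y ∉ Ioc (((n:ℝ)+1)*δ) (((n:ℝ)+1)*M) := by
        intro hmem
        have h2 : (n:ℝ) < y/δ := by
          rw [lt_div_iff₀ hδ]; nlinarith [hmem.1, Nat.cast_nonneg (α := ℝ) n]
        exact hn (Finset.mem_range.mpr (Nat.lt_ceil.mpr h2))
      rw [indicator_of_notMem hnot, mul_zero]
    rw [tsum_eq_sum hvanish]
    have hterm : ∀ n ∈ Finset.range N,
        ENNReal.ofReal ((n:ℝ)+1)⁻¹ *
          (Ioc (((n:ℝ)+1)*δ) (((n:ℝ)+1)*M)).indicator (fun _ => (1:ℝ≥0∞)) y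
        ≤ ENNReal.ofReal (M/y) := by
      intro n _
      by_cases hmem : y ∈ Ioc (((n:ℝ)+1)*δ) (((n:ℝ)+1)*M)
      · rw [indicator_of_mem hmem, mul_one]
        apply ENNReal.ofReal_le_ofReal
        have h1 : y/M ≤ (n:ℝ)+1 := (div_le_iff₀ hM).mpr (by linarith [hmem.2])
        calc ((n:ℝ)+1)⁻¹ ≤ (y/M)⁻¹ := by
              apply inv_anti₀ (by positivity) h1
          _ = M/y := inv_div y M
      · rw [indicator_of_notMem hmem, mul_zero]; exact zero_le
    calc ∑ n ∈ Finset.range N, ENNReal.ofReal ((n:ℝ)+1)⁻¹ *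
            (Ioc (((n:ℝ)+1)*δ) (((n:ℝ)+1)*M)).indicator (fun _ => (1:ℝ≥0∞)) y
        ≤ ∑ _n ∈ Finset.range N, ENNReal.ofReal (M/y) := Finset.sum_le_sum hterm
      _ = (N:ℝ≥0∞) * ENNReal.ofReal (M/y) := by
          rw [Finset.sum_const, Finset.card_range, nsmul_eq_mul]
      _ ≤ ENNReal.ofReal (2*y/δ) * ENNReal.ofReal (M/y) := by
          gcongr
          rw [← ENNReal.ofReal_natCast]
          apply ENNReal.ofReal_le_ofReal
          have h1 : (N:ℝ) ≤ y/δ + 1 := le_of_lt (Nat.ceil_lt_add_one (by positivity))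
          have h2 : 1 < y/δ := (one_lt_div hδ).mpr hyδ
          rw [mul_div_assoc]
          linarith
      _ = ENNReal.ofReal (2*y/δ * (M/y)) := (ENNReal.ofReal_mul (by positivity)).symm
      _ = ENNReal.ofReal (2*M/δ) := by
          congr 1; field_simp
  · push_neg at hy
    have h0 : ∀ n : ℕ, ENNReal.ofReal ((n:ℝ)+1)⁻¹ *
        (Ioc (((n:ℝ)+1)*δ) (((n:ℝ)+1)*M)).indicator (fun _ => (1:ℝ≥0∞)) y = 0 := by
      intro n; rw [indicator_of_notMem (hy n), mul_zero]
    simp only [h0, tsum_zero]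
    exact zero_le

lemma scale_lem (g : ℝ → ℝ≥0∞) (hg : Measurable g) {c : ℝ} (hc : 0 < c) (δ M : ℝ) :
    ∫⁻ x in Ioc δ M, g (c * x) = ENNReal.ofReal c⁻¹ * ∫⁻ y in Ioc (c*δ) (c*M), g y := by
  have hmap : Measure.map (c * ·) (volume : Measure ℝ) = ENNReal.ofReal c⁻¹ • volume := by
    rw [Real.map_volume_mul_left (ne_of_gt hc), abs_of_pos (inv_pos.mpr hc)]
  have h1 : ∫⁻ y in Ioc (c*δ) (c*M), g y ∂(Measure.map (c * ·) (volume : Measure ℝ))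
      = ENNReal.ofReal c⁻¹ * ∫⁻ y in Ioc (c*δ) (c*M), g y := by
    rw [hmap, Measure.restrict_smul, lintegral_smul_measure, smul_eq_mul]
  rw [Measure.restrict_map (measurable_const_mul c) measurableSet_Ioc,
      lintegral_map hg (measurable_const_mul c)] at h1
  rw [← h1]
  congr 1
  rw [preimage_const_mul_Ioc₀ _ _ hc, mul_div_cancel_left₀ _ (ne_of_gt hc),
      mul_div_cancel_left₀ _ (ne_of_gt hc)]

lemma key_lemma (g : ℝ → ℝ≥0∞) (hg : Measurable g) (hfin : ∫⁻ y, g y ≠ ∞)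
    {δ M : ℝ} (hδ : 0 < δ) :
    ∀ᵐ x ∂(volume : Measure ℝ), x ∈ Ioc δ M →
      Tendsto (fun n : ℕ => g ((n:ℝ) * x)) atTop (nhds 0) := by
  have hmeasn : ∀ n : ℕ, Measurable (fun x : ℝ => g (((n:ℝ)+1) * x)) :=
    fun n => hg.comp (measurable_const_mul _)
  have e1 : ∀ n : ℕ, ∫⁻ x in Ioc δ M, g (((n:ℝ)+1) * x)
      = ∫⁻ y, ENNReal.ofReal ((n:ℝ)+1)⁻¹ *
          (Ioc (((n:ℝ)+1)*δ) (((n:ℝ)+1)*M)).indicator g y := by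
    intro n
    rw [scale_lem g hg (by positivity : (0:ℝ) < (n:ℝ)+1) δ M,
        ← lintegral_indicator measurableSet_Ioc _,
        ← lintegral_const_mul _ (hg.indicator measurableSet_Ioc)]
  have key_int : ∑' n : ℕ, ∫⁻ x in Ioc δ M, g (((n:ℝ)+1) * x)
      ≤ ENNReal.ofReal (2*M/δ) * ∫⁻ y, g y := by
    calc ∑' n : ℕ, ∫⁻ x in Ioc δ M, g (((n:ℝ)+1) * x)
        = ∑' n : ℕ, ∫⁻ y, ENNReal.ofReal ((n:ℝ)+1)⁻¹ *
            (Ioc (((n:ℝ)+1)*δ) (((n:ℝ)+1)*M)).indicator g y := tsum_congr e1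
      _ = ∫⁻ y, ∑' n : ℕ, ENNReal.ofReal ((n:ℝ)+1)⁻¹ *
            (Ioc (((n:ℝ)+1)*δ) (((n:ℝ)+1)*M)).indicator g y := by
          exact (lintegral_tsum (fun n =>
            ((measurable_const.mul (hg.indicator measurableSet_Ioc)).aemeasurable))).symm
      _ ≤ ∫⁻ y, ENNReal.ofReal (2*M/δ) * g y := by
          apply lintegral_mono
          intro y
          have hfact : ∀ n : ℕ, (Ioc (((n:ℝ)+1)*δ) (((n:ℝ)+1)*M)).indicator g y
              = (Ioc (((n:ℝ)+1)*δ) (((n:ℝ)+1)*M)).indicator (fun _ => (1:ℝ≥0∞)) y * g y := by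
            intro n
            by_cases h : y ∈ Ioc (((n:ℝ)+1)*δ) (((n:ℝ)+1)*M) <;> simp [h]
          calc ∑' n : ℕ, ENNReal.ofReal ((n:ℝ)+1)⁻¹ *
                (Ioc (((n:ℝ)+1)*δ) (((n:ℝ)+1)*M)).indicator g y
              = (∑' n : ℕ, ENNReal.ofReal ((n:ℝ)+1)⁻¹ *
                  (Ioc (((n:ℝ)+1)*δ) (((n:ℝ)+1)*M)).indicator (fun _ => (1:ℝ≥0∞)) y) * g y := by
                simp_rw [hfact, ← mul_assoc]
                exact ENNReal.tsum_mul_right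
            _ ≤ ENNReal.ofReal (2*M/δ) * g y :=
                mul_le_mul_left (count_bound hδ y) _
      _ = ENNReal.ofReal (2*M/δ) * ∫⁻ y, g y := lintegral_const_mul _ hg
  have hne : ∫⁻ x in Ioc δ M, ∑' n : ℕ, g (((n:ℝ)+1) * x) ≠ ∞ := by
    rw [lintegral_tsum (fun n => (hmeasn n).aemeasurable)]
    exact ne_top_of_le_ne_top (ENNReal.mul_ne_top ENNReal.ofReal_ne_top hfin) key_int
  have hae : ∀ᵐ x ∂(volume.restrict (Ioc δ M)), ∑' n : ℕ, g (((n:ℝ)+1) * x) < ∞ :=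
    ae_lt_top (Measurable.ennreal_tsum hmeasn) hne
  rw [ae_restrict_iff' measurableSet_Ioc] at hae
  filter_upwards [hae] with x hx hxmem
  have h0 : Tendsto (fun n : ℕ => g (((n:ℝ)+1) * x)) atTop (nhds 0) :=
    ENNReal.tendsto_atTop_zero_of_tsum_ne_top (hx hxmem).ne
  have : Tendsto (fun n : ℕ => g ((((n+1:ℕ)):ℝ) * x)) atTop (nhds 0) := by
    convert h0 using 2 with n
    push_cast
    ring_nf
  exact (tendsto_add_atTop_iff_nat 1).mp this

lemma pos_side (g : ℝ → ℝ≥0∞) (hg : Measurable g) (hfin : ∫⁻ y, g y ≠ ∞) :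
    ∀ᵐ x ∂(volume : Measure ℝ), 0 < x →
      Tendsto (fun n : ℕ => g ((n:ℝ) * x)) atTop (nhds 0) := by
  have H : ∀ k : ℕ, ∀ᵐ x ∂(volume : Measure ℝ),
      x ∈ Ioc (((k:ℝ)+1)⁻¹) ((k:ℝ)+1) →
        Tendsto (fun n : ℕ => g ((n:ℝ) * x)) atTop (nhds 0) :=
    fun k => key_lemma g hg hfin (by positivity)
  filter_upwards [ae_all_iff.mpr H] with x hx hxpos
  obtain ⟨k1, hk1⟩ := exists_nat_ge x
  obtain ⟨k2, hk2⟩ := exists_nat_ge x⁻¹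
  refine hx (k1 + k2) ⟨?_, ?_⟩
  · have h1 : x⁻¹ < (↑(k1+k2):ℝ)+1 := by push_cast; linarith [Nat.cast_nonneg (α := ℝ) k1]
    have := inv_strictAnti₀ (inv_pos.mpr hxpos) h1
    rwa [inv_inv] at this
  · push_cast; linarith [Nat.cast_nonneg (α := ℝ) k2]

theorem stmt0 (f : ℝ → ℝ) (hmeas : Measurable f) (hnonneg : ∀ x, 0 ≤ f x)
    (hint : Integrable f (volume : Measure ℝ)) :
    ∀ᵐ x ∂(volume : Measure ℝ),
      Tendsto (fun n : ℕ => f ((n : ℝ) * x)) atTop (nhds 0) := by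
  set g : ℝ → ℝ≥0∞ := fun x => ENNReal.ofReal (f x) with hgdef
  have hg : Measurable g := hmeas.ennreal_ofReal
  have hfin : ∫⁻ y, g y ≠ ∞ := by
    have := hint.hasFiniteIntegral
    rw [hasFiniteIntegral_iff_norm] at this
    have heq : ∀ y : ℝ, g y = ENNReal.ofReal ‖f y‖ := by
      intro y; rw [hgdef]; simp [Real.norm_eq_abs, abs_of_nonneg (hnonneg y)]
    simp only [heq]
    exact this.ne
  have h1 := pos_side g hg hfin
  have hgneg : Measurable (fun y : ℝ => g (-y)) := hg.comp measurable_neg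
  have hfinneg : ∫⁻ y, g (-y) ≠ ∞ := by
    have : ∫⁻ y, g (-y) ∂(volume : Measure ℝ) = ∫⁻ y, g y ∂(volume : Measure ℝ) := by
      rw [← lintegral_map hg measurable_neg, Measure.map_neg_eq_self (volume : Measure ℝ)]
    rw [this]; exact hfin
  have h2 := pos_side (fun y : ℝ => g (-y)) hgneg hfinneg
  have hemb : MeasurableEmbedding (fun x : ℝ => -x) :=
    (Homeomorph.neg ℝ).measurableEmbedding
  have h2' : ∀ᵐ x : ℝ, 0 < -x →
      Tendsto (fun n : ℕ => g (-((n:ℝ) * -x))) atTop (nhds 0) := by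
    have hiff := hemb.ae_map_iff (μ := (volume : Measure ℝ))
      (p := fun x => 0 < x → Tendsto (fun n : ℕ => g (-((n:ℝ) * x))) atTop (nhds 0))
    rw [show Measure.map (fun x : ℝ => -x) volume = volume from
      Measure.map_neg_eq_self (volume : Measure ℝ)] at hiff
    exact hiff.mp h2
  have h0 : ∀ᵐ x : ℝ, x ≠ 0 := by
    rw [ae_iff, show {x : ℝ | ¬ x ≠ 0} = {0} by ext; simp]
    exact measure_singleton 0
  filter_upwards [h1, h2', h0] with x hx1 hx2 hxne
  have hgt : Tendsto (fun n : ℕ => g ((n:ℝ) * x)) atTop (nhds 0) := by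
    rcases hxne.lt_or_gt with h | h
    · have := hx2 (by linarith)
      convert this using 2 with n
      ring_nf
    · exact hx1 h
  have ht : Tendsto (fun n : ℕ => (g ((n:ℝ) * x)).toReal) atTop
      (nhds (0:ℝ≥0∞).toReal) :=
    (ENNReal.tendsto_toReal (by simp)).comp hgt
  simp only [ENNReal.toReal_zero] at ht
  convert ht using 2 with n
  rw [hgdef]
  exact (ENNReal.toReal_ofReal (hnonneg _)).symm
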